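/- arXiv:1811.10294 — 4 statements merged into one kernel-verified Lean document; each statement's English description precedes it below -/
import Mathlib

section
/- Let p be a positive integer, β ≤ 0, α > 1. If the coefficients of f(z) = z^p + Σ_{k≥p+1} a_k z^k (analytic on the unit disk) satisfy Σ_{k≥p+1} [pα + β + k(1-β)] |a_k| < p(α-1), then for every z in the unit disk, Re(z f'(z)/f(z)) < β |z f'(z)/f(z) - p| + p α; in particular f ∈ M_p(α,β). -/
set_option maxHeartbeats 1000000


open Complex Metric

/-- Theorem 2.3: coefficient sufficient condition for `f ∈ M_p(α,β)`. -/
theorem stmt_2 (p : ℕ) (hp : 1 ≤ p) (α β : ℝ) (hβ : β ≤ 0) (hα : 1 < α)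
    (f : ℂ → ℂ) (a : ℕ → ℂ)
    (ha0 : ∀ k, k ≤ p → a k = 0)
    (hfa : ∀ z ∈ ball (0 : ℂ) 1, f z = z ^ p + ∑' k : ℕ, a k * z ^ k)
    (hsum : Summable (fun k : ℕ => ((p : ℝ) * α + β + (k : ℝ) * (1 - β)) * ‖a k‖))
    (hlt : ∑' k : ℕ, ((p : ℝ) * α + β + (k : ℝ) * (1 - β)) * ‖a k‖ < (p : ℝ) * (α - 1)) :
    ∀ z ∈ ball (0 : ℂ) 1, z ≠ 0 →
      (z * deriv f z / f z).re < β * ‖z * deriv f z / f z - (p : ℂ)‖ + (p : ℝ) * α := by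
  intro z hz hz0
  have hp1 : (0:ℝ) < p := by exact_mod_cast hp
  have hp1' : (1:ℝ) ≤ p := by exact_mod_cast hp
  have hβ1 : (1:ℝ) ≤ 1 - β := by linarith
  -- coefficient lower bounds
  have hcoef : ∀ k : ℕ, (k:ℝ) * ‖a k‖ ≤ ((p : ℝ) * α + β + (k : ℝ) * (1 - β)) * ‖a k‖ := by
    intro k
    rcases le_or_gt k p with h | h
    · simp [ha0 k h]
    · have hk1 : (1:ℝ) ≤ (k:ℝ) := by exact_mod_cast Nat.one_le_iff_ne_zero.mpr (by omega)
      have : (k:ℝ) ≤ (p : ℝ) * α + β + (k : ℝ) * (1 - β) := by nlinarith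
      exact mul_le_mul_of_nonneg_right this (norm_nonneg _)
  have hcoefA : ∀ k : ℕ, ‖a k‖ ≤ ((p : ℝ) * α + β + (k : ℝ) * (1 - β)) * ‖a k‖ := by
    intro k
    rcases le_or_gt k p with h | h
    · simp [ha0 k h]
    · have hk1 : (1:ℝ) ≤ (k:ℝ) := by exact_mod_cast Nat.one_le_iff_ne_zero.mpr (by omega)
      have : (1:ℝ) ≤ (p : ℝ) * α + β + (k : ℝ) * (1 - β) := by nlinarith
      nlinarith [norm_nonneg (a k)]
  have hcoefB : ∀ k : ℕ, ((k:ℝ) - p) * ‖a k‖ ≤ ((p : ℝ) * α + β + (k : ℝ) * (1 - β)) * ‖a k‖ := by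
    intro k
    rcases le_or_gt k p with h | h
    · simp [ha0 k h]
    · have hk1 : (p:ℝ) + 1 ≤ (k:ℝ) := by exact_mod_cast h
      have : ((k:ℝ) - p) ≤ (p : ℝ) * α + β + (k : ℝ) * (1 - β) := by nlinarith
      exact mul_le_mul_of_nonneg_right this (norm_nonneg _)
  have hBnn : ∀ k : ℕ, (0:ℝ) ≤ ((k:ℝ) - p) * ‖a k‖ := by
    intro k
    rcases le_or_gt k p with h | h
    · simp [ha0 k h]
    · have : (p:ℝ) ≤ (k:ℝ) := by exact_mod_cast h.le
      nlinarith [norm_nonneg (a k)]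
  have hsumK : Summable (fun k : ℕ => (k:ℝ) * ‖a k‖) :=
    Summable.of_nonneg_of_le (fun k => by positivity) hcoef hsum
  have hsumA : Summable (fun k : ℕ => ‖a k‖) :=
    Summable.of_nonneg_of_le (fun k => norm_nonneg _) hcoefA hsum
  have hsumB : Summable (fun k : ℕ => ((k:ℝ) - p) * ‖a k‖) :=
    Summable.of_nonneg_of_le hBnn hcoefB hsum
  set A : ℝ := ∑' k : ℕ, ‖a k‖ with hA
  set B : ℝ := ∑' k : ℕ, ((k:ℝ) - p) * ‖a k‖ with hB
  have hAnn : 0 ≤ A := tsum_nonneg fun k => norm_nonneg _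
  have hBnn' : 0 ≤ B := tsum_nonneg hBnn
  -- key numeric fact : (1-β) * B + p(α-1) * A < p(α-1)
  have hkey : (1 - β) * B + (p:ℝ) * (α - 1) * A < (p:ℝ) * (α - 1) := by
    have h1 : (1 - β) * B + (p:ℝ) * (α - 1) * A
        = ∑' k : ℕ, ((1 - β) * (((k:ℝ) - p) * ‖a k‖) + (p:ℝ) * (α - 1) * ‖a k‖) := by
      rw [hB, hA, ← tsum_mul_left, ← tsum_mul_left]
      exact (Summable.tsum_add (hsumB.mul_left _) (hsumA.mul_left _)).symm
    rw [h1]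
    refine lt_of_le_of_lt (Summable.tsum_le_tsum ?_ ((hsumB.mul_left _).add (hsumA.mul_left _)) hsum) hlt
    intro k
    rcases le_or_gt k p with h | h
    · simp [ha0 k h]
    · have hk1 : (p:ℝ) + 1 ≤ (k:ℝ) := by exact_mod_cast h
      have : (1 - β) * ((k:ℝ) - p) + (p:ℝ) * (α - 1) ≤ (p : ℝ) * α + β + (k : ℝ) * (1 - β) := by
        nlinarith [mul_nonneg (neg_nonneg.2 hβ) (by linarith [hp1'] : (0:ℝ) ≤ (p:ℝ) - 1)]
      nlinarith [norm_nonneg (a k)]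
  have hA1 : A < 1 := by
    have := Summable.tsum_le_tsum hcoefA hsumA hsum
    nlinarith
  -- series summability at z and norms
  set r : ℝ := ‖z‖ with hr
  have hr0 : 0 < r := norm_pos_iff.mpr hz0
  have hr1 : r < 1 := by simpa [hr] using mem_ball_zero_iff.mp hz
  -- summability of complex series
  have hsumz : ∀ w : ℂ, w ∈ ball (0:ℂ) 1 → Summable (fun k : ℕ => a k * w ^ k) := by
    intro w hw
    refine Summable.of_norm (Summable.of_nonneg_of_le (fun k => norm_nonneg _) (fun k => ?_) hsumA)
    have hw1 : ‖w‖ < 1 := by simpa using mem_ball_zero_iff.mp hw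
    calc ‖a k * w ^ k‖ = ‖a k‖ * ‖w‖ ^ k := by simp
      _ ≤ ‖a k‖ * 1 := by
          exact mul_le_mul_of_nonneg_left (pow_le_one₀ (norm_nonneg _) hw1.le) (norm_nonneg _)
      _ = ‖a k‖ := mul_one _
  -- derivative of f at z
  have hg : HasDerivAt (fun w => ∑' k : ℕ, a k * w ^ k)
      (∑' k : ℕ, a k * ((k:ℂ) * z ^ (k-1))) z := by
    refine hasDerivAt_tsum_of_isPreconnected (u := fun k : ℕ => (k:ℝ) * ‖a k‖)
      (F := ℂ) hsumK isOpen_ball (convex_ball (0:ℂ) 1).isPreconnected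
      (g := fun k w => a k * w ^ k) (g' := fun k w => a k * ((k:ℂ) * w ^ (k-1)))
      (fun k w _ => (hasDerivAt_pow k w).const_mul (a k)) (fun k w hw => ?_)
      (mem_ball_self one_pos) (hsumz 0 (mem_ball_self one_pos)) hz
    have hw1 : ‖w‖ < 1 := by simpa using mem_ball_zero_iff.mp hw
    have : ‖w ^ (k-1)‖ ≤ 1 := by
      rw [norm_pow]; exact pow_le_one₀ (norm_nonneg _) hw1.le
    calc ‖a k * ((k:ℂ) * w ^ (k-1))‖ = ‖a k‖ * ((k:ℝ) * ‖w ^ (k-1)‖) := by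
          simp [norm_mul, mul_assoc]
      _ ≤ ‖a k‖ * ((k:ℝ) * 1) := by
          refine mul_le_mul_of_nonneg_left (mul_le_mul_of_nonneg_left this ?_) (norm_nonneg _)
          positivity
      _ = (k:ℝ) * ‖a k‖ := by ring
  have heq : f =ᶠ[nhds z] fun w => w ^ p + ∑' k : ℕ, a k * w ^ k :=
    Filter.eventuallyEq_of_mem (isOpen_ball.mem_nhds hz) hfa
  have hderivAt : HasDerivAt f ((p:ℂ) * z ^ (p-1) + ∑' k : ℕ, a k * ((k:ℂ) * z ^ (k-1))) z :=
    ((hasDerivAt_pow p z).add hg).congr_of_eventuallyEq heq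
  have hderiv : deriv f z = (p:ℂ) * z ^ (p-1) + ∑' k : ℕ, a k * ((k:ℂ) * z ^ (k-1)) :=
    hderivAt.deriv
  have hfz : f z = z ^ p + ∑' k : ℕ, a k * z ^ k := hfa z hz
  -- numerator identity
  have hzp : z * z ^ (p-1) = z ^ p := by
    rw [← pow_succ', Nat.sub_add_cancel hp]
  have hterm : ∀ k : ℕ, z * (a k * ((k:ℂ) * z ^ (k-1))) = (k:ℂ) * (a k * z ^ k) := by
    intro k
    cases k with
    | zero => simp
    | succ n => simp only [Nat.add_sub_cancel, pow_succ, Nat.cast_succ]; ring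
  have hsumKz : Summable (fun k : ℕ => (k:ℂ) * (a k * z ^ k)) := by
    refine Summable.of_norm (Summable.of_nonneg_of_le (fun k => norm_nonneg _)
      (fun k => ?_) hsumK)
    calc ‖(k:ℂ) * (a k * z ^ k)‖ = (k:ℝ) * (‖a k‖ * r ^ k) := by
          simp [norm_mul, norm_pow, hr]
      _ ≤ (k:ℝ) * (‖a k‖ * 1) := by
          refine mul_le_mul_of_nonneg_left (mul_le_mul_of_nonneg_left ?_ (norm_nonneg _)) ?_
          · exact pow_le_one₀ hr0.le hr1.le
          · positivity
      _ = (k:ℝ) * ‖a k‖ := by ring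
  have hsz := hsumz z hz
  have hnum : z * deriv f z - (p:ℂ) * f z = ∑' k : ℕ, ((k:ℂ) - p) * (a k * z ^ k) := by
    have e1 : z * deriv f z = (p:ℂ) * z ^ p + ∑' k : ℕ, (k:ℂ) * (a k * z ^ k) := by
      rw [hderiv, mul_add, ← tsum_mul_left]
      congr 1
      · rw [mul_left_comm, hzp]
      · exact tsum_congr hterm
    have e2 : (p:ℂ) * f z = (p:ℂ) * z ^ p + ∑' k : ℕ, (p:ℂ) * (a k * z ^ k) := by
      rw [hfz, mul_add, ← tsum_mul_left]
    rw [e1, e2, add_sub_add_left_eq_sub, ← Summable.tsum_sub hsumKz (hsz.mul_left _)]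
    exact tsum_congr (fun k => by ring)
  -- termwise norm bounds
  have htb : ∀ k : ℕ, ‖((k:ℂ) - p) * (a k * z ^ k)‖ ≤ (((k:ℝ) - p) * ‖a k‖) * r ^ (p+1) := by
    intro k
    rcases le_or_gt k p with h | h
    · simp [ha0 k h]
    · have hkp : (p:ℝ) ≤ (k:ℝ) := by exact_mod_cast h.le
      have h1 : ‖((k:ℂ) - (p:ℂ))‖ = (k:ℝ) - p := by
        have hc : ((k:ℂ) - (p:ℂ)) = (((k:ℝ) - (p:ℝ) : ℝ) : ℂ) := by push_cast; ring
        rw [hc, Complex.norm_real, Real.norm_eq_abs, _root_.abs_of_nonneg (sub_nonneg.mpr hkp)]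
      have h2 : r ^ k ≤ r ^ (p+1) := pow_le_pow_of_le_one hr0.le hr1.le h
      calc ‖((k:ℂ) - p) * (a k * z ^ k)‖ = ((k:ℝ) - p) * (‖a k‖ * r ^ k) := by
            rw [norm_mul, norm_mul, norm_pow, h1, hr]
        _ ≤ ((k:ℝ) - p) * (‖a k‖ * r ^ (p+1)) := by
            refine mul_le_mul_of_nonneg_left (mul_le_mul_of_nonneg_left h2 (norm_nonneg _)) ?_
            linarith
        _ = (((k:ℝ) - p) * ‖a k‖) * r ^ (p+1) := by ring
  have hta : ∀ k : ℕ, ‖a k * z ^ k‖ ≤ ‖a k‖ * r ^ (p+1) := by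
    intro k
    rcases le_or_gt k p with h | h
    · simp only [ha0 k h, zero_mul, norm_zero]
      positivity
    · have h2 : r ^ k ≤ r ^ (p+1) := pow_le_pow_of_le_one hr0.le hr1.le h
      calc ‖a k * z ^ k‖ = ‖a k‖ * r ^ k := by rw [norm_mul, norm_pow, hr]
        _ ≤ ‖a k‖ * r ^ (p+1) := mul_le_mul_of_nonneg_left h2 (norm_nonneg _)
  -- numerator norm bound
  have hnum_norm : ‖z * deriv f z - (p:ℂ) * f z‖ ≤ (B * r ^ (p+1)) := by
    rw [hnum]
    have hs1 : Summable (fun k : ℕ => ‖((k:ℂ) - p) * (a k * z ^ k)‖) :=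
      Summable.of_nonneg_of_le (fun k => norm_nonneg _) htb (hsumB.mul_right _)
    calc ‖∑' k : ℕ, ((k:ℂ) - p) * (a k * z ^ k)‖ ≤ ∑' k : ℕ, ‖((k:ℂ) - p) * (a k * z ^ k)‖ :=
          norm_tsum_le_tsum_norm hs1
      _ ≤ ∑' k : ℕ, (((k:ℝ) - p) * ‖a k‖) * r ^ (p+1) :=
          Summable.tsum_le_tsum htb hs1 (hsumB.mul_right _)
      _ = B * r ^ (p+1) := tsum_mul_right
  -- denominator lower bound
  have hSnorm : ‖∑' k : ℕ, a k * z ^ k‖ ≤ A * r ^ (p+1) := by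
    have hs1 : Summable (fun k : ℕ => ‖a k * z ^ k‖) :=
      Summable.of_nonneg_of_le (fun k => norm_nonneg _) hta (hsumA.mul_right _)
    calc ‖∑' k : ℕ, a k * z ^ k‖ ≤ ∑' k : ℕ, ‖a k * z ^ k‖ := norm_tsum_le_tsum_norm hs1
      _ ≤ ∑' k : ℕ, ‖a k‖ * r ^ (p+1) := Summable.tsum_le_tsum hta hs1 (hsumA.mul_right _)
      _ = A * r ^ (p+1) := tsum_mul_right
  have hden : r ^ p * (1 - r * A) ≤ ‖f z‖ := by
    have h3 : ‖z ^ p‖ ≤ ‖f z‖ + ‖∑' k : ℕ, a k * z ^ k‖ := by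
      calc ‖z ^ p‖ = ‖f z - ∑' k : ℕ, a k * z ^ k‖ := by rw [hfz]; congr 1; ring
        _ ≤ _ := norm_sub_le _ _
    have h4 : ‖z ^ p‖ = r ^ p := by rw [norm_pow, hr]
    have h5 : r ^ p * (1 - r * A) = r ^ p - A * r ^ (p+1) := by ring
    linarith [hSnorm, h3, h4.symm.le, h4.le]
  have hdpos : 0 < 1 - r * A := by nlinarith
  have hfpos : 0 < ‖f z‖ := lt_of_lt_of_le (by positivity) hden
  have hfne : f z ≠ 0 := norm_pos_iff.mp hfpos
  -- quotient bound
  have hw : z * deriv f z / f z - (p:ℂ) = (z * deriv f z - (p:ℂ) * f z) / f z := by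
    field_simp
  have hwnorm : ‖z * deriv f z / f z - (p:ℂ)‖ ≤ (B * r ^ (p+1)) / (r ^ p * (1 - r * A)) := by
    rw [hw, norm_div]
    exact div_le_div₀ (by positivity) hnum_norm (by positivity) hden
  have hsimp : (B * r ^ (p+1)) / (r ^ p * (1 - r * A)) = r * B / (1 - r * A) := by
    rw [pow_succ]
    have : r ^ p ≠ 0 := by positivity
    field_simp
  rw [hsimp] at hwnorm
  -- final arithmetic
  have hS : 0 ≤ (1 - β) * B + (p:ℝ) * (α - 1) * A :=
    add_nonneg (mul_nonneg (by linarith) hBnn') (mul_nonneg (by nlinarith) hAnn)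
  have hrS : r * ((1 - β) * B + (p:ℝ) * (α - 1) * A) ≤ (1 - β) * B + (p:ℝ) * (α - 1) * A :=
    mul_le_of_le_one_left hS hr1.le
  have key2 : r * ((1 - β) * B + (p:ℝ) * (α - 1) * A) < (p:ℝ) * (α - 1) :=
    lt_of_le_of_lt hrS hkey
  have h2 : (1 - β) * (r * B / (1 - r * A)) < (p:ℝ) * (α - 1) := by
    rw [← mul_div_assoc, div_lt_iff₀ hdpos]
    have expand : (1 - β) * (r * B)
        = r * ((1 - β) * B + (p:ℝ) * (α - 1) * A) - (p:ℝ) * (α - 1) * (r * A) := by ring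
    have expand2 : (p:ℝ) * (α - 1) * (1 - r * A)
        = (p:ℝ) * (α - 1) - (p:ℝ) * (α - 1) * (r * A) := by ring
    rw [expand, expand2]
    exact sub_lt_sub_right key2 _
  have h3 : (1 - β) * ‖z * deriv f z / f z - (p:ℂ)‖ < (p:ℝ) * (α - 1) :=
    lt_of_le_of_lt (mul_le_mul_of_nonneg_left hwnorm (by linarith)) h2
  have hre : (z * deriv f z / f z).re - p ≤ ‖z * deriv f z / f z - (p:ℂ)‖ := by
    have := Complex.re_le_norm (z * deriv f z / f z - (p:ℂ))
    simp only [Complex.sub_re, Complex.natCast_re] at this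
    simpa using this
  have e : (1 - β) * ‖z * deriv f z / f z - (p:ℂ)‖
      = ‖z * deriv f z / f z - (p:ℂ)‖ - β * ‖z * deriv f z / f z - (p:ℂ)‖ := by ring
  rw [e] at h3
  linarith
end

section
/- Let β ≤ 0 and α > 1. If f(z) = z + Σ_{k≥2} a_k z^k is analytic on the unit disk and Σ_{k≥2} [α + β + k(1-β)] |a_k| < α - 1, then Re(z f'(z)/f(z)) < β |z f'(z)/f(z) - 1| + α for all z in the unit disk. -/
open Complex Metric

/-- Corollary 2.2: the case `p = 1`; a sufficient condition for `f ∈ MD(α,β)`. -/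
theorem stmt_3 (α β : ℝ) (hβ : β ≤ 0) (hα : 1 < α)
    (f : ℂ → ℂ) (a : ℕ → ℂ)
    (ha0 : ∀ k, k ≤ 1 → a k = 0)
    (hfa : ∀ z ∈ ball (0 : ℂ) 1, f z = z + ∑' k : ℕ, a k * z ^ k)
    (hsum : Summable (fun k : ℕ => (α + β + (k : ℝ) * (1 - β)) * ‖a k‖))
    (hlt : ∑' k : ℕ, (α + β + (k : ℝ) * (1 - β)) * ‖a k‖ < α - 1) :
    ∀ z ∈ ball (0 : ℂ) 1, z ≠ 0 →
      (z * deriv f z / f z).re < β * ‖z * deriv f z / f z - 1‖ + α := by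
  -- coefficient bound
  have hck : ∀ k : ℕ, 2 ≤ k → ((k : ℝ) + 1) ≤ α + β + (k : ℝ) * (1 - β) := by
    intro k hk
    have h2 : (2 : ℝ) ≤ (k : ℝ) := by exact_mod_cast hk
    nlinarith
  -- summability of ‖a k‖
  have hA : Summable (fun k : ℕ => ‖a k‖) := by
    refine Summable.of_nonneg_of_le (fun k => norm_nonneg _) (fun k => ?_) hsum
    rcases le_or_gt k 1 with h | h
    · simp [ha0 k h]
    · have := hck k h
      nlinarith [norm_nonneg (a k), (by exact_mod_cast Nat.zero_le k : (0:ℝ) ≤ (k:ℝ))]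
  have hkA : Summable (fun k : ℕ => (k : ℝ) * ‖a k‖) := by
    refine Summable.of_nonneg_of_le
      (fun k => mul_nonneg (Nat.cast_nonneg k) (norm_nonneg _)) (fun k => ?_) hsum
    rcases le_or_gt k 1 with h | h
    · simp [ha0 k h]
    · have := hck k h
      nlinarith [norm_nonneg (a k), (by exact_mod_cast Nat.zero_le k : (0:ℝ) ≤ (k:ℝ))]
  have hB : Summable (fun k : ℕ => ((k : ℝ) - 1) * ‖a k‖) := by
    have := hkA.sub hA
    simpa [sub_mul] using this
  set A : ℝ := ∑' k : ℕ, ‖a k‖ with hAdef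
  set B : ℝ := ∑' k : ℕ, ((k : ℝ) - 1) * ‖a k‖ with hBdef
  have hA0 : 0 ≤ A := tsum_nonneg fun k => norm_nonneg _
  have hB0 : 0 ≤ B := by
    refine tsum_nonneg fun k => ?_
    rcases le_or_gt k 1 with h | h
    · simp [ha0 k h]
    · have h2 : (2 : ℝ) ≤ (k : ℝ) := by exact_mod_cast h
      nlinarith [norm_nonneg (a k)]
  -- the key numeric decomposition
  have hS : ∑' k : ℕ, (α + β + (k : ℝ) * (1 - β)) * ‖a k‖ = (1 - β) * B + (α + 1) * A := by
    rw [hBdef, hAdef, ← tsum_mul_left, ← tsum_mul_left,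
      ← Summable.tsum_add (hB.mul_left _) (hA.mul_left _)]
    exact tsum_congr fun k => by ring
  rw [hS] at hlt
  have hA1 : A < 1 := by nlinarith
  have hkey : (1 - β) * B < (α - 1) * (1 - A) := by nlinarith
  -- now fix z
  intro z hz hz0
  have ht1 : ‖z‖ < 1 := by simpa using mem_ball_zero_iff.mp hz
  have ht0 : 0 < ‖z‖ := norm_pos_iff.mpr hz0
  set t : ℝ := ‖z‖ with htdef
  -- summability of complex series
  have hsum_g : ∀ w : ℂ, w ∈ ball (0 : ℂ) 1 → Summable (fun k : ℕ => a k * w ^ k) := by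
    intro w hw
    have hw1 : ‖w‖ < 1 := by simpa using mem_ball_zero_iff.mp hw
    refine Summable.of_norm_bounded hA fun k => ?_
    rw [norm_mul, norm_pow]
    calc ‖a k‖ * ‖w‖ ^ k ≤ ‖a k‖ * 1 := by
          refine mul_le_mul_of_nonneg_left ?_ (norm_nonneg _)
          exact pow_le_one₀ (norm_nonneg w) hw1.le
      _ = ‖a k‖ := mul_one _
  have hsum_gz := hsum_g z hz
  have hsum_kz : Summable (fun k : ℕ => (k : ℂ) * a k * z ^ k) := by
    refine Summable.of_norm_bounded hkA fun k => ?_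
    rw [norm_mul, norm_mul, norm_pow]
    have h1 : ‖(k : ℂ)‖ = (k : ℝ) := by simp
    rw [h1, mul_assoc]
    refine mul_le_mul_of_nonneg_left ?_ (Nat.cast_nonneg k)
    calc ‖a k‖ * ‖z‖ ^ k ≤ ‖a k‖ * 1 := by
          refine mul_le_mul_of_nonneg_left ?_ (norm_nonneg _)
          exact pow_le_one₀ (norm_nonneg z) ht1.le
      _ = ‖a k‖ := mul_one _
  -- derivative of the tsum
  set g : ℂ → ℂ := fun w => ∑' k : ℕ, a k * w ^ k with hgdef
  set D : ℂ := ∑' k : ℕ, (k : ℂ) * a k * z ^ (k - 1) with hDdef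
  have hgD : HasDerivAt g D z := by
    refine hasDerivAt_tsum_of_isPreconnected hkA isOpen_ball
      (convex_ball (0:ℂ) 1).isPreconnected
      (g := fun k y => a k * y ^ k) (g' := fun k y => (k : ℂ) * a k * y ^ (k - 1))
      (fun k y hy => ?_) (fun k y hy => ?_) (mem_ball_self one_pos) (hsum_g 0 (mem_ball_self one_pos)) hz
    · have := (hasDerivAt_pow k y).const_mul (a k)
      exact this.congr_deriv (by ring)
    · have hy1 : ‖y‖ < 1 := by simpa using mem_ball_zero_iff.mp hy
      rw [norm_mul, norm_mul, norm_pow]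
      have h1 : ‖(k : ℂ)‖ = (k : ℝ) := by simp
      rw [h1, mul_assoc]
      refine mul_le_mul_of_nonneg_left ?_ (Nat.cast_nonneg k)
      calc ‖a k‖ * ‖y‖ ^ (k - 1) ≤ ‖a k‖ * 1 := by
            refine mul_le_mul_of_nonneg_left ?_ (norm_nonneg _)
            exact pow_le_one₀ (norm_nonneg y) hy1.le
        _ = ‖a k‖ := mul_one _
  -- deriv f z = 1 + D
  have hfeq : f =ᶠ[nhds z] fun w => w + g w := by
    filter_upwards [isOpen_ball.mem_nhds hz] with w hw
    exact hfa w hw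
  have hderiv : deriv f z = 1 + D := by
    rw [Filter.EventuallyEq.deriv_eq hfeq]
    exact (((hasDerivAt_id z).add hgD)).deriv
  have hfz : f z = z + g z := hfa z hz
  -- z * D = ∑' k, k * a k * z ^ k
  have hzD : z * D = ∑' k : ℕ, (k : ℂ) * a k * z ^ k := by
    rw [hDdef, ← tsum_mul_left]
    refine tsum_congr fun k => ?_
    cases k with
    | zero => simp
    | succ n =>
      simp only [Nat.add_sub_cancel, pow_succ]
      ring
  -- numerator
  set N : ℂ := ∑' k : ℕ, ((k : ℂ) - 1) * a k * z ^ k with hNdef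
  have hNeq : z * deriv f z - f z = N := by
    rw [hderiv, hfz, hNdef]
    have h1 : z * (1 + D) - (z + g z) = z * D - g z := by ring
    rw [h1, hzD, hgdef]
    rw [← Summable.tsum_sub hsum_kz hsum_gz]
    exact tsum_congr fun k => by ring
  -- norm bounds
  have hgle : ‖g z‖ ≤ A * t := by
    refine (norm_tsum_le_tsum_norm (hsum_gz.norm)).trans ?_
    rw [hAdef, ← tsum_mul_right]
    refine Summable.tsum_le_tsum (fun k => ?_) hsum_gz.norm (hA.mul_right t)
    rcases le_or_gt k 1 with h | h
    · simp [ha0 k h]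
    · rw [norm_mul, norm_pow]
      refine mul_le_mul_of_nonneg_left ?_ (norm_nonneg _)
      calc ‖z‖ ^ k ≤ ‖z‖ ^ 1 :=
            pow_le_pow_of_le_one (norm_nonneg z) ht1.le (by omega)
        _ = t := pow_one _
  have hsum_N : Summable (fun k : ℕ => ((k : ℂ) - 1) * a k * z ^ k) := by
    have : (fun k : ℕ => ((k : ℂ) - 1) * a k * z ^ k)
        = fun k : ℕ => (k : ℂ) * a k * z ^ k - a k * z ^ k := by
      funext k; ring
    rw [this]
    exact hsum_kz.sub hsum_gz
  have hNle : ‖N‖ ≤ B * t := by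
    refine (norm_tsum_le_tsum_norm (hsum_N.norm)).trans ?_
    rw [hBdef, ← tsum_mul_right]
    refine Summable.tsum_le_tsum (fun k => ?_) hsum_N.norm ((hB.mul_right t))
    rcases le_or_gt k 1 with h | h
    · simp [ha0 k h]
    · rw [norm_mul, norm_mul, norm_pow]
      have h2 : (1 : ℝ) ≤ (k : ℝ) := by exact_mod_cast h.le.trans' (by norm_num)
      have hk1 : ‖(k : ℂ) - 1‖ = (k : ℝ) - 1 := by
        have h0 : ((k : ℂ) - 1) = (((k : ℝ) - 1 : ℝ) : ℂ) := by push_cast; ring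
        rw [h0, Complex.norm_real, Real.norm_eq_abs,
          _root_.abs_of_nonneg (by linarith : (0:ℝ) ≤ (k:ℝ) - 1)]
      rw [hk1]
      have hzk : ‖z‖ ^ k ≤ t := by
        calc ‖z‖ ^ k ≤ ‖z‖ ^ 1 :=
              pow_le_pow_of_le_one (norm_nonneg z) ht1.le (by omega)
          _ = t := pow_one _
      nlinarith [mul_nonneg (mul_nonneg (by linarith : (0:ℝ) ≤ (k:ℝ) - 1)
        (norm_nonneg (a k))) (sub_nonneg.mpr hzk)]
  -- lower bound on ‖f z‖
  have hflow : (1 - A) * t ≤ ‖f z‖ := by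
    rw [hfz]
    have := norm_sub_norm_le (z + g z) (g z)
    simp only [add_sub_cancel_right] at this
    have h2 : ‖z‖ - ‖g z‖ ≤ ‖z + g z‖ := by
      have := norm_add_le (z + g z) (-g z)
      simp only [add_neg_cancel_right, norm_neg] at this
      linarith
    nlinarith
  have hfz0 : f z ≠ 0 := by
    intro h
    rw [h, norm_zero] at hflow
    nlinarith
  -- w - 1
  set w : ℂ := z * deriv f z / f z with hwdef
  have hw1 : w - 1 = N / f z := by
    rw [hwdef, div_sub_one hfz0, hNeq]
  have hnormw : ‖w - 1‖ * ‖f z‖ = ‖N‖ := by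
    rw [hw1, norm_div, div_mul_cancel₀]
    exact norm_ne_zero_iff.mpr hfz0
  -- key strict inequality
  have hmain : (1 - β) * ‖w - 1‖ < α - 1 := by
    have hfpos : 0 < ‖f z‖ := norm_pos_iff.mpr hfz0
    have h1 : (1 - β) * ‖N‖ ≤ (1 - β) * (B * t) :=
      mul_le_mul_of_nonneg_left hNle (by linarith)
    have h3 : (1 - β) * (B * t) < (α - 1) * ((1 - A) * t) := by nlinarith
    have h4 : (α - 1) * ((1 - A) * t) ≤ (α - 1) * ‖f z‖ :=
      mul_le_mul_of_nonneg_left hflow (by linarith)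
    have h5 : (1 - β) * (‖w - 1‖ * ‖f z‖) < (α - 1) * ‖f z‖ := by
      rw [hnormw]; linarith
    nlinarith [norm_nonneg (w - 1)]
  have hre : w.re - 1 ≤ ‖w - 1‖ := by
    have := Complex.re_le_norm (w - 1)
    simpa [Complex.sub_re] using this
  nlinarith [norm_nonneg (w - 1)]
end

section
/- Let p ≥ 1 be an integer, α > 1, β ≤ 0, θ ∈ ℝ. Define f(z) = z^p + Σ_{k≥p+1} [p(p-1)(α-1) e^{iθ} / ((pα + β + k(1-β)) k (k-1))] z^k. Then the coefficients a_k of f satisfy Σ_{k≥p+1} [pα + β + k(1-β)] |a_k| = (p-1)(α-1) < p(α-1); consequently f ∈ M_p(α,β). -/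
open Complex Metric

set_option maxHeartbeats 2000000 in
/-- The Example: an explicit member of the class `M_p(α,β)`. -/
theorem stmt_4 (p : ℕ) (hp : 1 ≤ p) (α β θ : ℝ) (hα : 1 < α) (hβ : β ≤ 0)
    (a : ℕ → ℂ) (f : ℂ → ℂ)
    (ha : ∀ k : ℕ, a k = if p + 1 ≤ k then
        ((p : ℂ) * ((p : ℂ) - 1) * ((α : ℂ) - 1) * Complex.exp (θ * Complex.I)) /
          ((((p : ℂ) * α + β + (k : ℂ) * (1 - β))) * (k : ℂ) * ((k : ℂ) - 1))
      else 0)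
    (hf : ∀ z : ℂ, f z = z ^ p + ∑' k : ℕ, a k * z ^ k) :
    (∑' k : ℕ, ((p : ℝ) * α + β + (k : ℝ) * (1 - β)) * ‖a k‖ = ((p : ℝ) - 1) * (α - 1)) ∧
      ((p : ℝ) - 1) * (α - 1) < (p : ℝ) * (α - 1) ∧
      (∀ z ∈ ball (0 : ℂ) 1, z ≠ 0 →
        (z * deriv f z / f z).re < β * ‖z * deriv f z / f z - (p : ℂ)‖ + (p : ℝ) * α) := by
  have hp1 : (1:ℝ) ≤ (p:ℝ) := by exact_mod_cast hp
  have hp0 : (0:ℝ) < (p:ℝ) := by linarith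
  have hα1 : (0:ℝ) < α - 1 := by linarith
  have hβ1 : (1:ℝ) ≤ 1 - β := by linarith
  set C : ℝ := (p:ℝ) * ((p:ℝ) - 1) * (α - 1) with hCdef
  have hC0 : 0 ≤ C := by
    apply mul_nonneg (mul_nonneg (le_of_lt hp0) (by linarith)) (le_of_lt hα1)
  set c : ℕ → ℝ := fun k => (p:ℝ)*α + β + (k:ℝ)*(1-β) with hcdef
  have hc1 : ∀ k : ℕ, 1 ≤ k → 1 ≤ c k := by
    intro k hk
    have hk1 : (1:ℝ) ≤ (k:ℝ) := by exact_mod_cast hk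
    have hβk : 0 ≤ β * (1 - (k:ℝ)) := by
      have h := mul_nonneg (neg_nonneg.2 hβ) (by linarith : (0:ℝ) ≤ (k:ℝ) - 1)
      nlinarith
    have hpα : (1:ℝ) ≤ (p:ℝ)*α := by nlinarith
    simp only [hcdef]
    nlinarith
  have hazero : ∀ k : ℕ, k < p + 1 → a k = 0 := by
    intro k hk
    rw [ha k, if_neg (by omega)]
  have hanorm : ∀ k : ℕ, p + 1 ≤ k → ‖a k‖ = C / (c k * k * ((k:ℝ) - 1)) := by
    intro k hk
    rw [ha k, if_pos hk]
    have hnum : (p : ℂ) * ((p : ℂ) - 1) * ((α : ℂ) - 1) = ((C:ℝ):ℂ) := by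
      simp only [hCdef]; push_cast; ring
    have hden : (((p : ℂ) * α + β + (k : ℂ) * (1 - β))) * (k : ℂ) * ((k : ℂ) - 1)
        = (((c k * k * ((k:ℝ)-1) : ℝ)):ℂ) := by
      simp only [hcdef]; push_cast; ring
    rw [hnum, hden, norm_div, norm_mul, Complex.norm_exp]
    have : ((θ:ℂ) * Complex.I).re = 0 := by simp
    rw [this, Real.exp_zero, mul_one]
    have hck : 1 ≤ c k := hc1 k (by omega)
    have hk2 : (2:ℝ) ≤ (k:ℝ) := by exact_mod_cast (by omega : 2 ≤ k)
    have hdpos : 0 < c k * k * ((k:ℝ) - 1) := mul_pos (mul_pos (by linarith) (by linarith)) (by linarith)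
    rw [Complex.norm_real, Complex.norm_real, Real.norm_of_nonneg hC0,
      Real.norm_of_nonneg (le_of_lt hdpos)]
  -- the weighted sum
  set g : ℕ → ℝ := fun k => c k * ‖a k‖ with hgdef
  have hgnn : ∀ k, 0 ≤ g k := by
    intro k
    rcases lt_or_ge k (p+1) with h | h
    · simp [hgdef, hazero k h]
    · have := hc1 k (by omega)
      exact mul_nonneg (by linarith) (norm_nonneg _)
  have hgshift : ∀ n : ℕ, g (n + (p+1)) = C * ((1:ℝ)/(n+p) - 1/(n+p+1)) := by
    intro n
    have hk : p + 1 ≤ n + (p+1) := by omega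
    have hnp : (0:ℝ) < (n:ℝ) + p := by positivity
    have hck : 1 ≤ c (n + (p+1)) := hc1 _ (by omega)
    have hcast : ((n + (p+1) : ℕ) : ℝ) = (n:ℝ) + p + 1 := by push_cast; ring
    rw [hgdef]
    simp only
    rw [hanorm _ hk, hcast]
    have hc0 : c (n+(p+1)) ≠ 0 := by linarith
    have hnp' : (n:ℝ) + p ≠ 0 := ne_of_gt hnp
    have hnp1 : (n:ℝ) + p + 1 ≠ 0 := by linarith
    field_simp
    ring_nf
    rw [show C * (n:ℝ) * ((n:ℝ) + p)⁻¹ + C * (p:ℝ) * ((n:ℝ) + p)⁻¹ = C * (((n:ℝ) + p) * ((n:ℝ) + p)⁻¹) by ring,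
      mul_inv_cancel₀ hnp', mul_one]
  have htel : HasSum (fun n : ℕ => C * ((1:ℝ)/(n+p) - 1/(n+p+1))) (C * (1/p)) := by
    have hnn : ∀ n : ℕ, 0 ≤ C * ((1:ℝ)/(n+p) - 1/(n+p+1)) := by
      intro n
      have h1 : (0:ℝ) < n + p := by positivity
      have : (1:ℝ)/(n+p+1) ≤ 1/(n+p) := by
        apply one_div_le_one_div_of_le h1; linarith
      have := sub_nonneg.mpr this
      positivity
    rw [hasSum_iff_tendsto_nat_of_nonneg hnn]
    have key : ∀ N : ℕ, ∑ n ∈ Finset.range N, C * ((1:ℝ)/(n+p) - 1/(n+p+1)) =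
        C * (1/p - 1/(N+p)) := by
      intro N
      rw [← Finset.mul_sum]
      congr 1
      have := Finset.sum_range_sub' (fun i : ℕ => (1:ℝ)/(i+p)) N
      rw [show (1:ℝ)/p - 1/(N+p) = 1/(↑(0:ℕ)+↑p) - 1/(↑N+↑p) by norm_num, ← this]
      apply Finset.sum_congr rfl
      intro i _
      push_cast
      ring_nf
    simp only [key]
    have : Filter.Tendsto (fun N : ℕ => (1:ℝ)/(N+p)) Filter.atTop (nhds 0) := by
      simp only [one_div]
      exact ((tendsto_natCast_atTop_atTop (R:=ℝ)).atTop_add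
        (tendsto_const_nhds (x:=(p:ℝ)))).inv_tendsto_atTop
    have h2 := ((tendsto_const_nhds (x := (1:ℝ)/p)).sub this).const_mul C
    simpa using h2
  have hCp : C * (1/p) = ((p:ℝ) - 1) * (α - 1) := by
    rw [hCdef]; field_simp
  have hgsum : HasSum g (((p:ℝ) - 1) * (α - 1)) := by
    have h1 : HasSum (fun n : ℕ => g (n + (p+1))) (C * (1/p)) := by
      simp only [hgshift]; exact htel
    have h2 := (hasSum_nat_add_iff (f := g) (p+1)).mp h1
    have h3 : ∑ i ∈ Finset.range (p+1), g i = 0 := by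
      apply Finset.sum_eq_zero
      intro i hi
      have : a i = 0 := hazero i (Finset.mem_range.mp hi)
      simp [hgdef, this]
    rw [h3, add_zero, hCp] at h2
    exact h2
  -- summability of norms and weighted norms
  have hanC : ∀ k : ℕ, ‖a k‖ ≤ C := by
    intro k
    rcases lt_or_ge k (p+1) with h | h
    · simp [hazero k h, hC0]
    · rw [hanorm k h]
      have hck : 1 ≤ c k := hc1 k (by omega)
      have hk2 : (2:ℝ) ≤ (k:ℝ) := by exact_mod_cast (by omega : 2 ≤ k)
      have h0 : (1:ℝ) ≤ c k * k := by nlinarith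
      have h1 : (1:ℝ) ≤ c k * k * ((k:ℝ) - 1) := by nlinarith
      exact div_le_self hC0 h1
  have hA : Summable (fun k : ℕ => ‖a k‖) := by
    apply Summable.of_nonneg_of_le (fun k => norm_nonneg _) _ hgsum.summable
    intro k
    rcases lt_or_ge k (p+1) with h | h
    · simp [hazero k h, hgnn k]
    · have hck : 1 ≤ c k := hc1 k (by omega)
      calc ‖a k‖ = 1 * ‖a k‖ := (one_mul _).symm
        _ ≤ c k * ‖a k‖ := by
            apply mul_le_mul_of_nonneg_right hck (norm_nonneg _)
  set b : ℕ → ℝ := fun k => ((k:ℝ) - p) * ‖a k‖ with hbdef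
  have hbnn : ∀ k, 0 ≤ b k := by
    intro k
    rcases lt_or_ge k (p+1) with h | h
    · simp [hbdef, hazero k h]
    · have : (p:ℝ) + 1 ≤ (k:ℝ) := by exact_mod_cast h
      exact mul_nonneg (by linarith) (norm_nonneg _)
  have hbg : ∀ k, b k ≤ g k := by
    intro k
    rcases lt_or_ge k (p+1) with h | h
    · simp [hbdef, hazero k h, hgnn k]
    · have hk1 : (p:ℝ) + 1 ≤ (k:ℝ) := by exact_mod_cast h
      have hβk : 0 ≤ β * (1 - (k:ℝ)) := by
        have h2 := mul_nonneg (neg_nonneg.2 hβ) (by linarith : (0:ℝ) ≤ (k:ℝ) - 1)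
        nlinarith
      have hkp : (k:ℝ) - p ≤ c k := by
        simp only [hcdef]
        nlinarith
      exact mul_le_mul_of_nonneg_right hkp (norm_nonneg _)
  have hB : Summable b := Summable.of_nonneg_of_le hbnn hbg hgsum.summable
  set A : ℝ := ∑' k, ‖a k‖ with hAdef
  set B : ℝ := ∑' k, b k with hBdef
  have hAnn : 0 ≤ A := tsum_nonneg (fun k => norm_nonneg _)
  have hBnn : 0 ≤ B := tsum_nonneg hbnn
  have keyAB : (1-β) * B + (p:ℝ)*(α-1) * A ≤ ((p:ℝ) - 1) * (α - 1) := by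
    have hsum : (1-β) * B + (p:ℝ)*(α-1) * A
        = ∑' k, ((1-β) * b k + (p:ℝ)*(α-1) * ‖a k‖) := by
      rw [hBdef, hAdef, ← tsum_mul_left, ← tsum_mul_left]
      exact (Summable.tsum_add (hB.mul_left _) (hA.mul_left _)).symm
    rw [hsum, ← hgsum.tsum_eq]
    apply Summable.tsum_le_tsum _ ((hB.mul_left _).add (hA.mul_left _)) hgsum.summable
    intro k
    rcases lt_or_ge k (p+1) with h | h
    · simp [hbdef, hgdef, hazero k h]
    · have hk1 : (p:ℝ) + 1 ≤ (k:ℝ) := by exact_mod_cast h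
      have hβp : 0 ≤ β * (1 - (p:ℝ)) := by
        have h2 := mul_nonneg (neg_nonneg.2 hβ) (by linarith : (0:ℝ) ≤ (p:ℝ) - 1)
        nlinarith
      have hcoef : (1-β) * ((k:ℝ) - p) + (p:ℝ)*(α-1) ≤ c k := by
        simp only [hcdef]; nlinarith
      have h3 := mul_le_mul_of_nonneg_right hcoef (norm_nonneg (a k))
      simp only [hbdef, hgdef]
      have heq : (1-β) * (((k:ℝ) - p) * ‖a k‖) + (p:ℝ)*(α-1) * ‖a k‖
          = ((1-β) * ((k:ℝ) - p) + (p:ℝ)*(α-1)) * ‖a k‖ := by ring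
      rw [heq]
      exact h3
  have hPP : ((p:ℝ) - 1) * (α - 1) < (p:ℝ)*(α-1) := by
    have : (p:ℝ)*(α-1) - ((p:ℝ)-1)*(α-1) = α-1 := by ring
    linarith
  have hA1 : A < 1 := by
    have h1 : 0 ≤ (1-β) * B := mul_nonneg (by linarith) hBnn
    have h2 : (p:ℝ)*(α-1) * A ≤ ((p:ℝ) - 1) * (α - 1) := by linarith
    have h4 : (p:ℝ)*(α-1) * A < (p:ℝ)*(α-1) * 1 := by rw [mul_one]; linarith
    exact lt_of_mul_lt_mul_left h4 (by positivity)
  refine ⟨hgsum.tsum_eq, hPP, ?_⟩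
  intro z hz hz0
  have hz1 : ‖z‖ < 1 := mem_ball_zero_iff.mp hz
  have hz0' : 0 < ‖z‖ := norm_pos_iff.mpr hz0
  have h1A : (0:ℝ) < 1 - A := by linarith
  set r : ℝ := (1 + ‖z‖)/2 with hrdef
  have hr0 : (0:ℝ) < r := by positivity
  have hzr : ‖z‖ < r := by rw [hrdef]; linarith
  have hr1 : r < 1 := by rw [hrdef]; linarith
  -- termwise derivatives
  have hderiv_each : ∀ (n : ℕ), ∀ y ∈ ball (0:ℂ) r,
      HasDerivAt (fun y : ℂ => a n * y ^ n) (a n * ((n:ℂ) * y ^ (n-1))) y := by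
    intro n y _
    exact (hasDerivAt_pow n y).const_mul (a n)
  have hu : Summable (fun n : ℕ => C * ((n:ℝ) * r ^ (n-1))) := by
    have h1 : Summable (fun n : ℕ => (n:ℝ)^1 * r ^ n) :=
      summable_pow_mul_geometric_of_norm_lt_one 1
        (by rw [Real.norm_of_nonneg hr0.le]; exact hr1)
    apply (h1.mul_left (C / r)).congr
    intro n
    cases n with
    | zero => simp
    | succ m =>
      have hr : r ≠ 0 := ne_of_gt hr0
      have : ((m+1:ℕ):ℝ) = (m:ℝ) + 1 := by push_cast; ring
      simp only [this, Nat.add_sub_cancel, pow_succ, pow_one]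
      field_simp
  have hbnd : ∀ (n : ℕ), ∀ y ∈ ball (0:ℂ) r,
      ‖a n * ((n:ℂ) * y ^ (n-1))‖ ≤ C * ((n:ℝ) * r ^ (n-1)) := by
    intro n y hy
    have hyr : ‖y‖ ≤ r := le_of_lt (mem_ball_zero_iff.mp hy)
    rw [norm_mul, norm_mul, norm_pow, Complex.norm_natCast]
    have h1 : ‖y‖^(n-1) ≤ r^(n-1) := pow_le_pow_left₀ (norm_nonneg y) hyr _
    apply mul_le_mul (hanC n) (mul_le_mul_of_nonneg_left h1 (Nat.cast_nonneg n))
      (by positivity) hC0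
  have hsum0 : Summable (fun n : ℕ => a n * (0:ℂ) ^ n) := by
    apply summable_zero.congr
    intro n
    cases n with
    | zero => simp [hazero 0 (by omega)]
    | succ m => simp
  have hzmem : z ∈ ball (0:ℂ) r := mem_ball_zero_iff.mpr hzr
  have hDer : HasDerivAt (fun y : ℂ => ∑' n : ℕ, a n * y ^ n)
      (∑' n : ℕ, a n * ((n:ℂ) * z ^ (n-1))) z :=
    hasDerivAt_tsum_of_isPreconnected hu isOpen_ball (convex_ball _ _).isPreconnected
      hderiv_each hbnd (mem_ball_self hr0) hsum0 hzmem
  have hderiv_eq : deriv f z = (p:ℂ) * z^(p-1) + ∑' n : ℕ, a n * ((n:ℂ) * z ^ (n-1)) := by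
    have hfe : f = fun y : ℂ => y ^ p + ∑' n : ℕ, a n * y ^ n := funext hf
    have : HasDerivAt f ((p:ℂ) * z^(p-1) + ∑' n : ℕ, a n * ((n:ℂ) * z ^ (n-1))) z := by
      rw [hfe]
      exact (hasDerivAt_pow p z).add hDer
    exact this.deriv
  -- summability at z
  have hTs : Summable (fun k : ℕ => a k * z ^ k) := by
    apply Summable.of_norm_bounded hA
    intro k
    rw [norm_mul, norm_pow]
    calc ‖a k‖ * ‖z‖^k ≤ ‖a k‖ * 1 :=
          mul_le_mul_of_nonneg_left (pow_le_one₀ (norm_nonneg z) hz1.le) (norm_nonneg _)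
      _ = ‖a k‖ := mul_one _
  have hKs : Summable (fun k : ℕ => (k:ℂ) * a k * z ^ k) := by
    have h1 : Summable (fun k : ℕ => C * ((k:ℝ)^1 * ‖z‖ ^ k)) :=
      (summable_pow_mul_geometric_of_norm_lt_one 1
        (by rwa [Real.norm_of_nonneg (norm_nonneg z)])).mul_left C
    apply Summable.of_norm_bounded h1
    intro k
    rw [norm_mul, norm_mul, norm_pow, Complex.norm_natCast]
    have h2 := mul_le_mul_of_nonneg_right
      (mul_le_mul_of_nonneg_left (hanC k) (Nat.cast_nonneg k))
      (pow_nonneg (norm_nonneg z) k)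
    calc (k:ℝ) * ‖a k‖ * ‖z‖^k ≤ (k:ℝ) * C * ‖z‖^k := h2
      _ = C * ((k:ℝ)^1 * ‖z‖^k) := by ring
  have hGs : Summable (fun k : ℕ => ((k:ℂ) - p) * a k * z ^ k) := by
    apply (hKs.sub (hTs.mul_left (p:ℂ))).congr
    intro k
    ring
  -- z * D
  have hzD : z * (∑' n : ℕ, a n * ((n:ℂ) * z ^ (n-1))) = ∑' n : ℕ, (n:ℂ) * a n * z ^ n := by
    rw [← tsum_mul_left]
    congr 1
    funext n
    cases n with
    | zero => simp
    | succ m =>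
      simp only [Nat.add_sub_cancel, pow_succ]
      ring
  have hzp : z * ((p:ℂ) * z^(p-1)) = (p:ℂ) * z^p := by
    rw [show z^p = z^(p-1) * z by rw [← pow_succ, Nat.sub_add_cancel hp]]
    ring
  have hG : z * deriv f z - (p:ℂ) * f z = ∑' k : ℕ, ((k:ℂ) - p) * a k * z ^ k := by
    have h1 : (∑' k : ℕ, (k:ℂ) * a k * z^k) - ∑' k : ℕ, (p:ℂ) * (a k * z^k)
        = ∑' k : ℕ, ((k:ℂ) - p) * a k * z^k := by
      rw [← (hKs.hasSum.sub (hTs.mul_left (p:ℂ)).hasSum).tsum_eq]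
      congr 1
      funext k
      ring
    rw [hderiv_eq, hf z, mul_add, hzD, hzp, mul_add, ← tsum_mul_left, ← h1]
    ring
  -- norm bounds
  have htermG : ∀ k : ℕ, ‖((k:ℂ) - p) * a k * z ^ k‖ ≤ b k * ‖z‖^p := by
    intro k
    rcases lt_or_ge k (p+1) with h | h
    · simp [hazero k h, hbdef]
    · have hk1 : (p:ℝ) ≤ (k:ℝ) := by exact_mod_cast (by omega : p ≤ k)
      rw [norm_mul, norm_mul, norm_pow]
      have h1 : ‖((k:ℂ) - p)‖ = (k:ℝ) - p := by
        rw [show ((k:ℂ) - p) = (((k:ℝ) - p : ℝ) : ℂ) by push_cast; ring,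
          Complex.norm_real, Real.norm_of_nonneg (by linarith)]
      have h2 : ‖z‖^k ≤ ‖z‖^p :=
        pow_le_pow_of_le_one (norm_nonneg z) hz1.le (by omega)
      rw [h1, hbdef]
      simp only
      rw [mul_assoc, mul_assoc]
      apply mul_le_mul_of_nonneg_left _ (by linarith)
      exact mul_le_mul_of_nonneg_left h2 (norm_nonneg _)
  have htermT : ∀ k : ℕ, ‖a k * z ^ k‖ ≤ ‖a k‖ * ‖z‖^p := by
    intro k
    rcases lt_or_ge k (p+1) with h | h
    · simp [hazero k h]
    · rw [norm_mul, norm_pow]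
      have h2 : ‖z‖^k ≤ ‖z‖^p :=
        pow_le_pow_of_le_one (norm_nonneg z) hz1.le (by omega)
      exact mul_le_mul_of_nonneg_left h2 (norm_nonneg _)
  have hGnorm : ‖∑' k : ℕ, ((k:ℂ) - p) * a k * z ^ k‖ ≤ B * ‖z‖^p := by
    have hsn : Summable (fun k : ℕ => ‖((k:ℂ) - p) * a k * z ^ k‖) :=
      Summable.of_nonneg_of_le (fun k => norm_nonneg _) htermG (hB.mul_right _)
    calc ‖∑' k : ℕ, ((k:ℂ) - p) * a k * z ^ k‖ ≤ ∑' k : ℕ, ‖((k:ℂ) - p) * a k * z ^ k‖ :=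
          norm_tsum_le_tsum_norm hsn
      _ ≤ ∑' k : ℕ, b k * ‖z‖^p := Summable.tsum_le_tsum htermG hsn (hB.mul_right _)
      _ = B * ‖z‖^p := by rw [tsum_mul_right]
  have hTnorm : ‖∑' k : ℕ, a k * z ^ k‖ ≤ A * ‖z‖^p := by
    have hsn : Summable (fun k : ℕ => ‖a k * z ^ k‖) :=
      Summable.of_nonneg_of_le (fun k => norm_nonneg _) htermT (hA.mul_right _)
    calc ‖∑' k : ℕ, a k * z ^ k‖ ≤ ∑' k : ℕ, ‖a k * z ^ k‖ := norm_tsum_le_tsum_norm hsn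
      _ ≤ ∑' k : ℕ, ‖a k‖ * ‖z‖^p := Summable.tsum_le_tsum htermT hsn (hA.mul_right _)
      _ = A * ‖z‖^p := by rw [tsum_mul_right]
  have hzp0 : (0:ℝ) < ‖z‖^p := pow_pos hz0' p
  have hfzlow : (1 - A) * ‖z‖^p ≤ ‖f z‖ := by
    have he : z^p = f z - ∑' k : ℕ, a k * z ^ k := by rw [hf z]; ring
    have h1 : ‖z‖^p ≤ ‖f z‖ + ‖∑' k : ℕ, a k * z ^ k‖ := by
      calc ‖z‖^p = ‖z^p‖ := (norm_pow z p).symm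
        _ = ‖f z - ∑' k : ℕ, a k * z ^ k‖ := by rw [← he]
        _ ≤ ‖f z‖ + ‖∑' k : ℕ, a k * z ^ k‖ := norm_sub_le _ _
    have h2 : (1 - A) * ‖z‖^p = ‖z‖^p - A * ‖z‖^p := by ring
    linarith
  have hfzpos : (0:ℝ) < ‖f z‖ := lt_of_lt_of_le (by positivity) hfzlow
  have hfz0 : f z ≠ 0 := by
    intro h
    rw [h, norm_zero] at hfzpos
    exact lt_irrefl 0 hfzpos
  have hw : z * deriv f z / f z - (p:ℂ) = (∑' k : ℕ, ((k:ℂ) - p) * a k * z ^ k) / f z := by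
    rw [← hG]
    field_simp
  have hwnorm : ‖z * deriv f z / f z - (p:ℂ)‖ ≤ B / (1 - A) := by
    rw [hw, norm_div]
    calc ‖∑' k : ℕ, ((k:ℂ) - p) * a k * z ^ k‖ / ‖f z‖
        ≤ (B * ‖z‖^p) / ((1 - A) * ‖z‖^p) :=
          div_le_div₀ (mul_nonneg hBnn hzp0.le) hGnorm (by positivity) hfzlow
      _ = B / (1 - A) := by rw [mul_comm B, mul_comm (1-A), mul_div_mul_left B (1-A) (ne_of_gt hzp0)]
  have hre : (z * deriv f z / f z).re ≤ ‖z * deriv f z / f z - (p:ℂ)‖ + p := by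
    have h1 : (z * deriv f z / f z - (p:ℂ)).re ≤ ‖z * deriv f z / f z - (p:ℂ)‖ := by
      exact Complex.re_le_norm _
    have h2 : (z * deriv f z / f z - (p:ℂ)).re = (z * deriv f z / f z).re - p := by simp
    linarith
  have hstrict : (1-β) * (B/(1-A)) < (p:ℝ)*(α-1) := by
    rw [← mul_div_assoc, div_lt_iff₀ h1A]
    have hexp : (p:ℝ)*(α-1) * (1 - A) = (p:ℝ)*(α-1) - (p:ℝ)*(α-1) * A := by ring
    linarith
  have h5 : (1-β) * ‖z * deriv f z / f z - (p:ℂ)‖ ≤ (1-β) * (B/(1-A)) :=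
    mul_le_mul_of_nonneg_left hwnorm (by linarith)
  have hpa : (p:ℝ)*(α-1) = (p:ℝ)*α - p := by ring
  linarith
end

section
/- Let p ≥ 1 be an integer, α > 1, β ≤ 0. Let a, b ∈ ℂ \ {0}, d, e ∈ ℂ with δ > 0 and Re(d + (e+1)/2) > 0, and let c be a real number with c > |a| + |b| + 1. Define the operator I(z) = z^p + Σ_{k≥p+1} (-1)^{k-p} (a)_{k-p} (b)_{k-p} (δ/4)^{k-p} / ((c)_{k-p} (d + (e+1)/2)_{k-p} ((k-p)!)^2) z^k, where (x)_n is the Pochhammer symbol. If Σ_{k≥p+1} [pα + β + k(1-β)] |(a)_{k-p} (b)_{k-p}| (δ/4)^{k-p} / ((c)_{k-p} (d + (e+1)/2)_{k-p} ((k-p)!)^2) < p(α-1), then I ∈ M_p(α,β), i.e. Re(z I'(z)/I(z)) < β |z I'(z)/I(z) - p| + pα for all z in the unit disk. -/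
open Complex Metric

section Aux

private lemma poch_norm_le (x : ℂ) (n : ℕ) :
    ‖(ascPochhammer ℂ n).eval x‖ ≤ (ascPochhammer ℝ n).eval ‖x‖ := by
  induction n with
  | zero => simp
  | succ n ih =>
    rw [ascPochhammer_succ_eval, ascPochhammer_succ_eval, norm_mul]
    have h1 : ‖x + (n : ℂ)‖ ≤ ‖x‖ + (n : ℝ) := by
      calc ‖x + (n : ℂ)‖ ≤ ‖x‖ + ‖(n : ℂ)‖ := norm_add_le _ _
        _ = ‖x‖ + (n : ℝ) := by rw [Complex.norm_natCast]
    exact mul_le_mul ih h1 (norm_nonneg _) ((norm_nonneg _).trans ih)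

private lemma poch_re_le_norm (x : ℂ) (hx : 0 < x.re) (n : ℕ) :
    (ascPochhammer ℝ n).eval x.re ≤ ‖(ascPochhammer ℂ n).eval x‖ := by
  induction n with
  | zero => simp
  | succ n ih =>
    rw [ascPochhammer_succ_eval, ascPochhammer_succ_eval, norm_mul]
    have h1 : x.re + (n : ℝ) ≤ ‖x + (n : ℂ)‖ := by
      have : (x + (n : ℂ)).re = x.re + (n : ℝ) := by simp
      calc x.re + (n : ℝ) = (x + (n : ℂ)).re := this.symm
        _ ≤ ‖x + (n : ℂ)‖ := Complex.re_le_norm _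
        _ = ‖x + (n : ℂ)‖ := rfl
    have hnn : 0 ≤ (ascPochhammer ℝ n).eval x.re :=
      le_of_lt (ascPochhammer_pos n _ hx)
    have hxn : 0 ≤ x.re + (n : ℝ) := by positivity
    exact mul_le_mul ih h1 hxn (norm_nonneg _)

private lemma poch_nonneg {x : ℝ} (hx : 0 ≤ x) (n : ℕ) :
    0 ≤ (ascPochhammer ℝ n).eval x := by
  induction n with
  | zero => simp
  | succ n ih =>
    rw [ascPochhammer_succ_eval]
    have : (0:ℝ) ≤ x + n := by positivity
    positivity

private lemma poch_mono {x y : ℝ} (hx : 0 ≤ x) (hxy : x ≤ y) (n : ℕ) :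
    (ascPochhammer ℝ n).eval x ≤ (ascPochhammer ℝ n).eval y := by
  induction n with
  | zero => simp
  | succ n ih =>
    rw [ascPochhammer_succ_eval, ascPochhammer_succ_eval]
    have h1 : (0:ℝ) ≤ x + n := by positivity
    exact mul_le_mul ih (by linarith) h1 (poch_nonneg (hx.trans hxy) n)

private lemma poch_le_fact {x : ℝ} (hx : 0 ≤ x) (n : ℕ) :
    (ascPochhammer ℝ n).eval x ≤ (x + 1) ^ n * (Nat.factorial n : ℝ) := by
  induction n with
  | zero => simp
  | succ n ih =>
    rw [ascPochhammer_succ_eval]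
    have h2 : x + (n:ℝ) ≤ (x + 1) * ((n:ℝ) + 1) := by nlinarith [Nat.cast_nonneg (α := ℝ) n]
    have h3 : (0:ℝ) ≤ x + n := by positivity
    calc (ascPochhammer ℝ n).eval x * (x + (n:ℝ))
        ≤ ((x + 1) ^ n * (Nat.factorial n : ℝ)) * ((x + 1) * ((n:ℝ) + 1)) := by
          exact mul_le_mul ih h2 h3 (by positivity)
      _ = (x + 1) ^ (n+1) * (Nat.factorial (n+1) : ℝ) := by
          rw [Nat.factorial_succ]; push_cast; ring

private lemma poch_ge_pow {x : ℝ} (hx : 0 < x) (n : ℕ) :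
    (min x 1) ^ n ≤ (ascPochhammer ℝ n).eval x := by
  induction n with
  | zero => simp
  | succ n ih =>
    rw [ascPochhammer_succ_eval, pow_succ]
    have hm : 0 < min x 1 := lt_min hx one_pos
    have h2 : min x 1 ≤ x + n := by
      have := min_le_left x 1
      have := Nat.cast_nonneg (α := ℝ) n
      linarith
    exact mul_le_mul ih h2 (le_of_lt hm) (poch_nonneg (le_of_lt hx) n)

private lemma poch_cast (x : ℝ) (n : ℕ) :
    (ascPochhammer ℂ n).eval (x : ℂ) = (((ascPochhammer ℝ n).eval x : ℝ) : ℂ) := by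
  induction n with
  | zero => simp
  | succ n ih =>
    rw [ascPochhammer_succ_eval, ascPochhammer_succ_eval, ih]
    push_cast
    ring

private lemma summable_shift (p : ℕ) {H : ℕ → ℝ} (hH : Summable H) :
    Summable (fun k => if p + 1 ≤ k then H (k - p) else 0) := by
  have hi : Function.Injective (fun n : ℕ => n + (p + 1)) := fun a b h => by
    simp only [] at h; omega
  have h0 : ∀ x ∉ Set.range (fun n : ℕ => n + (p + 1)),
      (fun k => if p + 1 ≤ k then H (k - p) else 0) x = 0 := by
    intro x hx
    have hx' : ¬ (p + 1 ≤ x) := by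
      intro h
      exact hx ⟨x - (p + 1), by simp only []; omega⟩
    simp [hx']
  refine (hi.summable_iff h0).mp ?_
  have heq : ((fun k => if p + 1 ≤ k then H (k - p) else 0) ∘ fun n : ℕ => n + (p + 1))
      = fun n => H (n + 1) := by
    funext n
    simp only [Function.comp]
    rw [if_pos (by omega)]
    congr 1
    omega
  rw [heq]
  exact (summable_nat_add_iff 1).mpr hH

end Aux

set_option maxHeartbeats 1600000 in
/-- Theorem 3.1: a sufficient condition for the operator
`I_{c,d}^{a,b}(p,e,δ)` to belong to the class `M_p(α,β)`. -/
theorem stmt_5 (p : ℕ) (hp : 1 ≤ p) (α β : ℝ) (hα : 1 < α) (hβ : β ≤ 0)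
    (a b d e : ℂ) (ha : a ≠ 0) (hb : b ≠ 0) (δ c : ℝ) (hδ : 0 < δ)
    (hd : 0 < (d + (e + 1) / 2).re)
    (hc : ‖a‖ + ‖b‖ + 1 < c)
    (I : ℂ → ℂ)
    (hI : ∀ z : ℂ, I z = z ^ p + ∑' k : ℕ,
      (if p + 1 ≤ k then
        ((-1 : ℂ) ^ (k - p) * (ascPochhammer ℂ (k - p)).eval a *
            (ascPochhammer ℂ (k - p)).eval b * ((δ : ℂ) / 4) ^ (k - p)) /
          ((ascPochhammer ℂ (k - p)).eval (c : ℂ) *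
            (ascPochhammer ℂ (k - p)).eval (d + (e + 1) / 2) *
            ((Nat.factorial (k - p) : ℂ)) ^ 2)
      else 0) * z ^ k)
    (hsum : ∑' k : ℕ,
      (if p + 1 ≤ k then
        ((p : ℝ) * α + β + (k : ℝ) * (1 - β)) *
          ‖(ascPochhammer ℂ (k - p)).eval a * (ascPochhammer ℂ (k - p)).eval b‖ *
          (δ / 4) ^ (k - p) /
          ((ascPochhammer ℝ (k - p)).eval c *
            ‖(ascPochhammer ℂ (k - p)).eval (d + (e + 1) / 2)‖ *
            ((Nat.factorial (k - p) : ℝ)) ^ 2)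
      else 0) < (p : ℝ) * (α - 1)) :
    ∀ z ∈ ball (0 : ℂ) 1, z ≠ 0 →
      (z * deriv I z / I z).re < β * ‖z * deriv I z / I z - (p : ℂ)‖ + (p : ℝ) * α := by
  -- basic positivity facts
  have hc0 : (0:ℝ) < c := by
    have := norm_nonneg a
    have := norm_nonneg b
    linarith
  have hp1 : (1:ℝ) ≤ (p:ℝ) := by exact_mod_cast hp
  set d' : ℂ := d + (e + 1) / 2 with hd'
  set m : ℝ := min d'.re 1 with hm
  have hm0 : 0 < m := lt_min hd one_pos
  set q : ℝ := (c + 1) * (δ / 4) / m with hq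
  have hq0 : 0 ≤ q := by positivity
  -- the coefficients
  set C : ℕ → ℂ := fun n =>
    ((-1 : ℂ) ^ n * (ascPochhammer ℂ n).eval a *
        (ascPochhammer ℂ n).eval b * ((δ : ℂ) / 4) ^ n) /
      ((ascPochhammer ℂ n).eval (c : ℂ) *
        (ascPochhammer ℂ n).eval d' *
        ((Nat.factorial n : ℂ)) ^ 2) with hC
  set R : ℕ → ℝ := fun n => ‖C n‖ with hR
  have hR0 : ∀ n, 0 ≤ R n := fun n => norm_nonneg _
  -- norm of the coefficient, explicitly
  have hPc : ∀ n : ℕ, ‖(ascPochhammer ℂ n).eval (c : ℂ)‖ = (ascPochhammer ℝ n).eval c := by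
    intro n
    rw [poch_cast, Complex.norm_real, Real.norm_eq_abs, abs_of_pos (ascPochhammer_pos n c hc0)]
  have hRval : ∀ n : ℕ, R n =
      ‖(ascPochhammer ℂ n).eval a * (ascPochhammer ℂ n).eval b‖ * (δ / 4) ^ n /
        ((ascPochhammer ℝ n).eval c * ‖(ascPochhammer ℂ n).eval d'‖ *
          ((Nat.factorial n : ℝ)) ^ 2) := by
    intro n
    have h4 : ‖((δ:ℂ)/4)‖ = δ/4 := by
      rw [norm_div]
      simp [abs_of_pos hδ]
    rw [hR, hC]
    simp only [norm_div, norm_mul, norm_pow, norm_neg, norm_one, one_pow, one_mul, h4,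
      hPc, Complex.norm_natCast]
  -- positivity of denominators
  have hPd' : ∀ n : ℕ, m ^ n ≤ ‖(ascPochhammer ℂ n).eval d'‖ := by
    intro n
    calc m ^ n ≤ (ascPochhammer ℝ n).eval d'.re := poch_ge_pow hd n
      _ ≤ ‖(ascPochhammer ℂ n).eval d'‖ := poch_re_le_norm d' hd n
  have hPd'pos : ∀ n : ℕ, 0 < ‖(ascPochhammer ℂ n).eval d'‖ := by
    intro n
    exact lt_of_lt_of_le (by positivity) (hPd' n)
  -- key coefficient bound : R n ≤ q ^ n / n !
  have hRle : ∀ n : ℕ, R n ≤ q ^ n / (Nat.factorial n : ℝ) := by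
    intro n
    have hfac : (0:ℝ) < (Nat.factorial n : ℝ) := by
      exact_mod_cast Nat.factorial_pos n
    have hPcpos : 0 < (ascPochhammer ℝ n).eval c := ascPochhammer_pos n c hc0
    have hMa : ‖(ascPochhammer ℂ n).eval a‖ ≤ (ascPochhammer ℝ n).eval c :=
      (poch_norm_le a n).trans (poch_mono (norm_nonneg a) (by linarith [norm_nonneg b]) n)
    have hMb : ‖(ascPochhammer ℂ n).eval b‖ ≤ (ascPochhammer ℝ n).eval c :=
      (poch_norm_le b n).trans (poch_mono (norm_nonneg b) (by linarith [norm_nonneg a]) n)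
    have step1 : R n ≤ ((ascPochhammer ℝ n).eval c * (ascPochhammer ℝ n).eval c * (δ/4)^n) /
        ((ascPochhammer ℝ n).eval c * (m ^ n * (Nat.factorial n : ℝ)^2)) := by
      rw [hRval n]
      apply div_le_div₀ (by positivity) ?_ (by positivity) ?_
      · rw [norm_mul]
        have : ‖(ascPochhammer ℂ n).eval a‖ * ‖(ascPochhammer ℂ n).eval b‖ ≤
            (ascPochhammer ℝ n).eval c * (ascPochhammer ℝ n).eval c :=
          mul_le_mul hMa hMb (norm_nonneg _) (le_of_lt hPcpos)
        have hδ4 : (0:ℝ) ≤ (δ/4)^n := by positivity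
        nlinarith
      · have h := mul_le_mul_of_nonneg_right
          (mul_le_mul_of_nonneg_left (hPd' n) hPcpos.le)
          (by positivity : (0:ℝ) ≤ ((Nat.factorial n : ℝ))^2)
        nlinarith [h]
    have step2 : ((ascPochhammer ℝ n).eval c * (ascPochhammer ℝ n).eval c * (δ/4)^n) /
        ((ascPochhammer ℝ n).eval c * (m ^ n * (Nat.factorial n : ℝ)^2))
        = ((ascPochhammer ℝ n).eval c * (δ/4)^n) / (m ^ n * (Nat.factorial n : ℝ)^2) := by
      rw [mul_assoc, mul_div_mul_left _ _ (ne_of_gt hPcpos)]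
    have hfc : (ascPochhammer ℝ n).eval c ≤ (c+1)^n * (Nat.factorial n : ℝ) :=
      poch_le_fact (le_of_lt hc0) n
    have step3 : ((ascPochhammer ℝ n).eval c * (δ/4)^n) / (m ^ n * (Nat.factorial n : ℝ)^2)
        ≤ ((c+1)^n * (Nat.factorial n : ℝ) * (δ/4)^n) / (m ^ n * (Nat.factorial n : ℝ)^2) := by
      gcongr
    have step4 : ((c+1)^n * (Nat.factorial n : ℝ) * (δ/4)^n) / (m ^ n * (Nat.factorial n : ℝ)^2)
        = q ^ n / (Nat.factorial n : ℝ) := by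
      have hqn : q ^ n = (c+1)^n * (δ/4)^n / m^n := by
        rw [hq, div_pow, mul_pow]
      rw [hqn]
      field_simp
    calc R n ≤ _ := step1
      _ = _ := step2
      _ ≤ _ := step3
      _ = _ := step4
  -- summability of the comparison series
  have Sum0 : Summable (fun n : ℕ => q ^ n / (Nat.factorial n : ℝ)) :=
    Real.summable_pow_div_factorial q
  have Sum1 : Summable (fun n : ℕ => ((n:ℝ) + 1) * (q ^ n / (Nat.factorial n : ℝ))) := by
    refine Summable.of_nonneg_of_le (fun n => by positivity) (fun n => ?_)
      (Real.summable_pow_div_factorial (2 * q))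
    have h2 : ((n:ℝ) + 1) ≤ 2 ^ n := by
      exact_mod_cast Nat.succ_le_of_lt Nat.lt_two_pow_self
    have h3 : ((n:ℝ) + 1) * q ^ n ≤ (2 * q) ^ n := by
      rw [mul_pow]
      exact mul_le_mul_of_nonneg_right h2 (by positivity)
    have hfac : (0:ℝ) < (Nat.factorial n : ℝ) := by exact_mod_cast Nat.factorial_pos n
    calc ((n:ℝ) + 1) * (q ^ n / (Nat.factorial n : ℝ))
        = (((n:ℝ) + 1) * q ^ n) / (Nat.factorial n : ℝ) := by ring
      _ ≤ (2 * q) ^ n / (Nat.factorial n : ℝ) := by gcongr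
  have SR : Summable R := Summable.of_nonneg_of_le hR0 hRle Sum0
  have SnR : Summable (fun n : ℕ => (n:ℝ) * R n) := by
    refine Summable.of_nonneg_of_le (fun n => mul_nonneg (Nat.cast_nonneg n) (hR0 n))
      (fun n => ?_) Sum1
    exact mul_le_mul (by linarith [Nat.cast_nonneg (α := ℝ) n]) (hRle n) (hR0 n) (by positivity)
  -- shifted series
  set uu : ℕ → ℝ := fun k => if p + 1 ≤ k then R (k - p) else 0 with huu
  set vv : ℕ → ℝ := fun k => if p + 1 ≤ k then ((k - p : ℕ) : ℝ) * R (k - p) else 0 with hvv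
  have Suu : Summable uu := summable_shift p SR
  have Svv : Summable vv := summable_shift p SnR
  set T : ℝ := ∑' k, uu k with hT
  set S : ℝ := ∑' k, vv k with hS
  have hT0 : 0 ≤ T := tsum_nonneg fun k => by
    by_cases hk : p + 1 ≤ k <;> simp [huu, hk, hR0] <;> split_ifs <;> simp [hR0]
  have hS0 : 0 ≤ S := tsum_nonneg fun k => by
    by_cases hk : p + 1 ≤ k <;>
      simp [hvv, hk, mul_nonneg (Nat.cast_nonneg (α := ℝ) _) (hR0 _)] <;> split_ifs <;> nlinarith [hR0 (k - p), Nat.cast_nonneg (α := ℝ) (k - p)]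
  -- rewrite hsum in terms of R
  set HW : ℕ → ℝ := fun n => ((p : ℝ) * α + β + ((n:ℝ) + (p:ℝ)) * (1 - β)) * R n with hHW
  have hWeq : (fun k : ℕ => if p + 1 ≤ k then
        ((p : ℝ) * α + β + (k : ℝ) * (1 - β)) *
          ‖(ascPochhammer ℂ (k - p)).eval a * (ascPochhammer ℂ (k - p)).eval b‖ *
          (δ / 4) ^ (k - p) /
          ((ascPochhammer ℝ (k - p)).eval c *
            ‖(ascPochhammer ℂ (k - p)).eval d'‖ *
            ((Nat.factorial (k - p) : ℝ)) ^ 2)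
      else 0) = fun k => if p + 1 ≤ k then HW (k - p) else 0 := by
    funext k
    by_cases hk : p + 1 ≤ k
    · simp only [if_pos hk, hHW, hRval (k - p)]
      rw [Nat.cast_sub (by omega : p ≤ k)]
      ring
    · simp [hk]
  have SHW : Summable HW := by
    set K : ℝ := (p:ℝ) * α + ((p:ℝ) + 1) * (1 - β) with hK
    have hK0 : 0 ≤ K := by nlinarith
    refine Summable.of_nonneg_of_le (fun n => ?_) (fun n => ?_) (Sum1.mul_left K)
    · apply mul_nonneg ?_ (hR0 n)
      nlinarith [Nat.cast_nonneg (α := ℝ) n]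
    · have hwK : (p : ℝ) * α + β + ((n:ℝ) + (p:ℝ)) * (1 - β) ≤ K * ((n:ℝ) + 1) := by
        have h1 : (0:ℝ) ≤ (1 - β) * ((p:ℝ) * (n:ℝ)) := by
          apply mul_nonneg (by linarith) (by positivity)
        have h2 : (0:ℝ) ≤ (p:ℝ) * α * (n:ℝ) := by
          apply mul_nonneg (by nlinarith) (Nat.cast_nonneg n)
        nlinarith
      calc ((p : ℝ) * α + β + ((n:ℝ) + (p:ℝ)) * (1 - β)) * R n
          ≤ (K * ((n:ℝ) + 1)) * (q ^ n / (Nat.factorial n : ℝ)) := by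
            apply mul_le_mul hwK (hRle n) (hR0 n) ?_
            positivity
        _ = K * (((n:ℝ) + 1) * (q ^ n / (Nat.factorial n : ℝ))) := by ring
  have SW : Summable (fun k => if p + 1 ≤ k then HW (k - p) else 0) := summable_shift p SHW
  rw [hWeq] at hsum
  -- the key inequality
  have hterm : ∀ k, (p:ℝ) * (α - 1) * uu k + (1 - β) * vv k
      ≤ (if p + 1 ≤ k then HW (k - p) else 0) := by
    intro k
    by_cases hk : p + 1 ≤ k
    · simp only [huu, hvv, hHW, if_pos hk]
      have hco : (p:ℝ) * (α - 1) + (1 - β) * ((k - p : ℕ) : ℝ)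
          ≤ (p : ℝ) * α + β + (((k - p : ℕ) : ℝ) + (p:ℝ)) * (1 - β) := by
        have h1 : (0:ℝ) ≤ (-β) * ((p:ℝ) - 1) := by
          apply mul_nonneg (by linarith) (by linarith)
        nlinarith
      nlinarith [mul_le_mul_of_nonneg_right hco (hR0 (k - p))]
    · simp [huu, hvv, hk, show ¬ p < k by omega]
  have key : (p:ℝ) * (α - 1) * T + (1 - β) * S < (p:ℝ) * (α - 1) := by
    have hle1 : ∑' k, ((p:ℝ) * (α - 1) * uu k + (1 - β) * vv k)
        ≤ ∑' k, (if p + 1 ≤ k then HW (k - p) else 0) :=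
      Summable.tsum_le_tsum hterm ((Suu.mul_left _).add (Svv.mul_left _)) SW
    have hsplit : ∑' k, ((p:ℝ) * (α - 1) * uu k + (1 - β) * vv k)
        = (p:ℝ) * (α - 1) * T + (1 - β) * S := by
      rw [Summable.tsum_add (Suu.mul_left _) (Svv.mul_left _), tsum_mul_left, tsum_mul_left]
    rw [← hsplit]
    exact lt_of_le_of_lt hle1 hsum
  have hpα : 0 < (p:ℝ) * (α - 1) := by nlinarith
  have hT1 : T < 1 := by
    have h1 : 0 ≤ (1 - β) * S := mul_nonneg (by linarith) hS0
    nlinarith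
  -- the full coefficient sequence
  set A : ℕ → ℂ := fun k => if k = p then 1 else if p + 1 ≤ k then C (k - p) else 0 with hA
  have hI' : ∀ z : ℂ, I z = z ^ p + ∑' k : ℕ, (if p + 1 ≤ k then C (k - p) else 0) * z ^ k := by
    intro z
    rw [hI z]
  have hAnorm : ∀ k, ‖A k‖ = (if k = p then 1 else 0) + uu k := by
    intro k
    by_cases hk : k = p
    · subst hk
      simp [hA, huu, Nat.not_succ_le_self]
    · by_cases hk2 : p + 1 ≤ k <;> simp [hA, huu, hk, hk2, hR] <;> split_ifs <;> simp
  have sAnorm : Summable (fun k => ‖A k‖) := by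
    have heq : (fun k => ‖A k‖) = fun k => (if k = p then (1:ℝ) else 0) + uu k :=
      funext hAnorm
    rw [heq]
    exact ((hasSum_ite_eq p (1:ℝ)).summable).add Suu
  have su' : Summable (fun k : ℕ => (k:ℝ) * ‖A k‖) := by
    have heq : (fun k : ℕ => (k:ℝ) * ‖A k‖)
        = fun k : ℕ => (if k = p then (p:ℝ) else 0) + ((p:ℝ) * uu k + vv k) := by
      funext k
      rw [hAnorm k]
      by_cases hk : k = p
      · subst hk
        simp [huu, hvv, Nat.not_succ_le_self]
      · by_cases hk2 : p + 1 ≤ k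
        · simp only [if_neg hk, if_pos hk2, huu, hvv]
          rw [Nat.cast_sub (by omega : p ≤ k)]
          ring
        · simp [hk, hk2, huu, hvv, show ¬ p < k by omega]
    rw [heq]
    exact ((hasSum_ite_eq p ((p:ℝ))).summable).add ((Suu.mul_left _).add Svv)
  -- series representation of I
  have hIg : ∀ z : ℂ, ‖z‖ ≤ 1 → I z = ∑' k, A k * z ^ k := by
    intro z hz
    have hsf : Summable (fun k => (if p + 1 ≤ k then C (k - p) else 0) * z ^ k) := by
      apply Summable.of_norm_bounded Suu
      intro k
      by_cases hk : p + 1 ≤ k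
      · simp only [if_pos hk, norm_mul, norm_pow, huu]
        calc ‖C (k - p)‖ * ‖z‖ ^ k ≤ ‖C (k - p)‖ * 1 := by
              exact mul_le_mul_of_nonneg_left (pow_le_one₀ (norm_nonneg z) hz) (norm_nonneg _)
          _ = R (k - p) := by rw [mul_one]
      · simp [hk, huu, show ¬ p < k by omega]
    have hpt : ∀ k, A k * z ^ k
        = (if p + 1 ≤ k then C (k - p) else 0) * z ^ k + (if k = p then z ^ p else 0) := by
      intro k
      by_cases hk : k = p
      · subst hk
        simp [hA, Nat.not_succ_le_self]
      · by_cases hk2 : p + 1 ≤ k <;> simp [hA, hk, hk2] <;> intro h <;> exact absurd h (by omega)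
    have h1 : ∑' k, A k * z ^ k
        = (∑' k, (if p + 1 ≤ k then C (k - p) else 0) * z ^ k) + z ^ p := by
      rw [tsum_congr hpt, Summable.tsum_add hsf ((hasSum_ite_eq p (z ^ p)).summable), tsum_ite_eq]
    rw [hI' z, h1, add_comm]
  -- differentiation of the series on the unit ball
  have hball : ∀ y : ℂ, y ∈ ball (0:ℂ) 1 → ‖y‖ ≤ 1 := fun y hy =>
    le_of_lt (mem_ball_zero_iff.mp hy)
  have hder : ∀ z₀ ∈ ball (0:ℂ) 1,
      HasDerivAt I (∑' k, A k * ((k:ℂ) * z₀ ^ (k - 1))) z₀ := by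
    intro z₀ hz₀
    have hg0 : Summable (fun k => A k * (0:ℂ) ^ k) := by
      apply Summable.of_norm_bounded sAnorm
      intro k
      rw [norm_mul]
      by_cases hk0 : k = 0
      · subst hk0; simp
      · simp [zero_pow hk0]
    have H : HasDerivAt (fun y => ∑' k, A k * y ^ k)
        (∑' k, A k * ((k:ℂ) * z₀ ^ (k - 1))) z₀ := by
      apply hasDerivAt_tsum_of_isPreconnected su' isOpen_ball
        (convex_ball (0:ℂ) 1).isPreconnected
        (fun k y (_ : y ∈ ball (0:ℂ) 1) => (hasDerivAt_pow k y).const_mul (A k))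
        ?_ (mem_ball_self one_pos) hg0 hz₀
      intro k y hy
      rw [norm_mul, norm_mul, norm_pow, Complex.norm_natCast]
      have h1 : ‖y‖ ^ (k - 1) ≤ 1 := pow_le_one₀ (norm_nonneg y) (hball y hy)
      calc ‖A k‖ * ((k:ℝ) * ‖y‖ ^ (k - 1)) ≤ ‖A k‖ * ((k:ℝ) * 1) := by
            apply mul_le_mul_of_nonneg_left ?_ (norm_nonneg _)
            exact mul_le_mul_of_nonneg_left h1 (Nat.cast_nonneg k)
        _ = (k:ℝ) * ‖A k‖ := by ring
    apply H.congr_of_eventuallyEq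
    exact Filter.eventuallyEq_of_mem (isOpen_ball.mem_nhds hz₀) fun y hy => hIg y (hball y hy)
  -- main argument
  intro z hz hz0
  have hr1 : ‖z‖ < 1 := mem_ball_zero_iff.mp hz
  have hr0 : 0 < ‖z‖ := norm_pos_iff.mpr hz0
  set r : ℝ := ‖z‖ with hrdef
  set Dz : ℂ := ∑' k, A k * ((k:ℂ) * z ^ (k - 1)) with hDz
  have hd1 : deriv I z = Dz := (hder z hz).deriv
  -- summabilities at z
  have S0 : Summable (fun k => A k * z ^ k) := by
    apply Summable.of_norm_bounded sAnorm
    intro k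
    rw [norm_mul, norm_pow]
    calc ‖A k‖ * ‖z‖ ^ k ≤ ‖A k‖ * 1 :=
          mul_le_mul_of_nonneg_left (pow_le_one₀ (norm_nonneg z) hr1.le) (norm_nonneg _)
      _ = ‖A k‖ := mul_one _
  have S1 : Summable (fun k : ℕ => (k:ℂ) * (A k * z ^ k)) := by
    apply Summable.of_norm_bounded su'
    intro k
    rw [norm_mul, norm_mul, norm_pow, Complex.norm_natCast]
    calc (k:ℝ) * (‖A k‖ * ‖z‖ ^ k) ≤ (k:ℝ) * (‖A k‖ * 1) := by
          apply mul_le_mul_of_nonneg_left ?_ (Nat.cast_nonneg k)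
          exact mul_le_mul_of_nonneg_left (pow_le_one₀ (norm_nonneg z) hr1.le) (norm_nonneg _)
      _ = (k:ℝ) * ‖A k‖ := by ring
  have S2 : Summable (fun k : ℕ => (p:ℂ) * (A k * z ^ k)) := S0.mul_left _
  -- the numerator as a series
  have hzD : z * Dz = ∑' k : ℕ, (k:ℂ) * (A k * z ^ k) := by
    rw [hDz, ← tsum_mul_left]
    apply tsum_congr
    intro k
    cases k with
    | zero => simp
    | succ n =>
      simp only [Nat.add_sub_cancel]
      rw [pow_succ]
      ring
  have hNUM : z * Dz - (p:ℂ) * I z = ∑' k : ℕ, ((k:ℂ) - (p:ℂ)) * (A k * z ^ k) := by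
    have h2 : (p:ℂ) * I z = ∑' k, (p:ℂ) * (A k * z ^ k) := by
      rw [hIg z hr1.le]
      exact tsum_mul_left.symm
    rw [hzD, h2, ← Summable.tsum_sub S1 S2]
    apply tsum_congr
    intro k
    ring
  -- bound the numerator
  have hbnd : ∀ k : ℕ, ‖((k:ℂ) - (p:ℂ)) * (A k * z ^ k)‖ ≤ vv k * r ^ p := by
    intro k
    by_cases hk : p + 1 ≤ k
    · have hk' : p ≤ k := by omega
      have hcast : ((k:ℂ) - (p:ℂ)) = ((k - p : ℕ) : ℂ) := (Nat.cast_sub hk').symm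
      have hA' : A k = C (k - p) := by
        simp only [hA]
        rw [if_neg (by omega : ¬ k = p), if_pos hk]
      have hvvk : vv k = ((k - p : ℕ) : ℝ) * R (k - p) := by simp [hvv, show p < k by omega]
      rw [hcast, hA', hvvk, norm_mul, norm_mul, norm_pow, Complex.norm_natCast]
      have hzk : ‖z‖ ^ k ≤ r ^ p := pow_le_pow_of_le_one hr0.le hr1.le hk'
      calc ((k - p : ℕ) : ℝ) * (‖C (k - p)‖ * ‖z‖ ^ k)
          ≤ ((k - p : ℕ) : ℝ) * (‖C (k - p)‖ * r ^ p) := by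
            apply mul_le_mul_of_nonneg_left ?_ (Nat.cast_nonneg _)
            exact mul_le_mul_of_nonneg_left hzk (norm_nonneg _)
        _ = (((k - p : ℕ) : ℝ) * R (k - p)) * r ^ p := by rw [hR]; ring
    · have hvvk : vv k = 0 := by simp [hvv, hk, show ¬ p < k by omega]
      rw [hvvk, zero_mul]
      by_cases hk2 : k = p
      · subst hk2; simp
      · have hAk : A k = 0 := by simp [hA, hk2, hk, show ¬ p < k by omega]
        simp [hAk]
  have Snorm : Summable (fun k : ℕ => ‖((k:ℂ) - (p:ℂ)) * (A k * z ^ k)‖) :=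
    Summable.of_nonneg_of_le (fun k => norm_nonneg _) hbnd (Svv.mul_right _)
  have hNUMle : ‖z * Dz - (p:ℂ) * I z‖ ≤ S * r ^ p := by
    rw [hNUM]
    calc ‖∑' k : ℕ, ((k:ℂ) - (p:ℂ)) * (A k * z ^ k)‖
        ≤ ∑' k : ℕ, ‖((k:ℂ) - (p:ℂ)) * (A k * z ^ k)‖ := norm_tsum_le_tsum_norm Snorm
      _ ≤ ∑' k, vv k * r ^ p := Summable.tsum_le_tsum hbnd Snorm (Svv.mul_right _)
      _ = S * r ^ p := tsum_mul_right
  -- bound the denominator from below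
  have hfb : ∀ k, ‖(if p + 1 ≤ k then C (k - p) else 0) * z ^ k‖ ≤ uu k * r ^ p := by
    intro k
    by_cases hk : p + 1 ≤ k
    · have hk' : p ≤ k := by omega
      have huuk : uu k = R (k - p) := by simp [huu, show p < k by omega]
      rw [if_pos hk, huuk, norm_mul, norm_pow]
      have hzk : ‖z‖ ^ k ≤ r ^ p := pow_le_pow_of_le_one hr0.le hr1.le hk'
      exact mul_le_mul_of_nonneg_left hzk (norm_nonneg _)
    · simp [hk, huu, show ¬ p < k by omega]
  have Sf' : Summable (fun k => ‖(if p + 1 ≤ k then C (k - p) else 0) * z ^ k‖) :=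
    Summable.of_nonneg_of_le (fun k => norm_nonneg _) hfb (Suu.mul_right _)
  have hfsum : ‖∑' k, (if p + 1 ≤ k then C (k - p) else 0) * z ^ k‖ ≤ T * r ^ p := by
    calc ‖∑' k, (if p + 1 ≤ k then C (k - p) else 0) * z ^ k‖
        ≤ ∑' k, ‖(if p + 1 ≤ k then C (k - p) else 0) * z ^ k‖ := norm_tsum_le_tsum_norm Sf'
      _ ≤ ∑' k, uu k * r ^ p := Summable.tsum_le_tsum hfb Sf' (Suu.mul_right _)
      _ = T * r ^ p := tsum_mul_right
  have hIzlow : r ^ p - T * r ^ p ≤ ‖I z‖ := by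
    have h1 : ‖z ^ p‖ - ‖∑' k, (if p + 1 ≤ k then C (k - p) else 0) * z ^ k‖
        ≤ ‖z ^ p + ∑' k, (if p + 1 ≤ k then C (k - p) else 0) * z ^ k‖ := by
      have h2 := norm_sub_norm_le (z ^ p)
        (-(∑' k, (if p + 1 ≤ k then C (k - p) else 0) * z ^ k))
      rw [norm_neg, sub_neg_eq_add] at h2
      exact h2
    have hzp : ‖z ^ p‖ = r ^ p := by rw [norm_pow]
    rw [hI' z]
    linarith
  have hrp : 0 < r ^ p := pow_pos hr0 p
  have hIpos : 0 < ‖I z‖ := by nlinarith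
  have hIne : I z ≠ 0 := norm_pos_iff.mp hIpos
  -- assemble
  set X : ℝ := ‖z * deriv I z / I z - (p:ℂ)‖ with hX
  have hX0 : 0 ≤ X := norm_nonneg _
  have hwp : z * deriv I z / I z - (p:ℂ) = (z * Dz - (p:ℂ) * I z) / I z := by
    rw [hd1]
    field_simp
  have hXI : X * ‖I z‖ = ‖z * Dz - (p:ℂ) * I z‖ := by
    rw [hX, hwp, norm_div]
    exact div_mul_cancel₀ _ (ne_of_gt hIpos)
  have hX1 : X * (1 - T) ≤ S := by
    have e1 : X * (r ^ p - T * r ^ p) ≤ S * r ^ p := by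
      calc X * (r ^ p - T * r ^ p) ≤ X * ‖I z‖ := mul_le_mul_of_nonneg_left hIzlow hX0
        _ = ‖z * Dz - (p:ℂ) * I z‖ := hXI
        _ ≤ S * r ^ p := hNUMle
    have e2 : (X * (1 - T)) * r ^ p ≤ S * r ^ p := by nlinarith
    exact le_of_mul_le_mul_right e2 hrp
  have hre : (z * deriv I z / I z).re ≤ X + (p:ℝ) := by
    have h1 : (z * deriv I z / I z - (p:ℂ)).re ≤ X := by
      rw [hX]
      exact Complex.re_le_norm _
    have h2 : (z * deriv I z / I z - (p:ℂ)).re = (z * deriv I z / I z).re - (p:ℝ) := by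
      simp
    linarith
  -- final inequality
  have h3 : (1 - β) * (X * (1 - T)) ≤ (1 - β) * S :=
    mul_le_mul_of_nonneg_left hX1 (by linarith)
  have h4 : (1 - β) * S < (p:ℝ) * (α - 1) * (1 - T) := by nlinarith
  have h5 : ((1 - β) * X) * (1 - T) < ((p:ℝ) * (α - 1)) * (1 - T) := by nlinarith
  have h6 : (1 - β) * X < (p:ℝ) * (α - 1) :=
    (mul_lt_mul_iff_of_pos_right (by linarith : (0:ℝ) < 1 - T)).mp h5
  have h7 : (p:ℝ) * (α - 1) = (p:ℝ) * α - (p:ℝ) := by ring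
  linarith
end
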